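/- Let p, q be probability distributions on Fin n with the property that there exists λ₀ > 1 such that p_j ≤ λ₀ q_j for all j. Then F(p,q) ≥ 1 − (1/2)·(√λ₀/(√λ₀+1))·‖p−q‖₁, where F(p,q) = ∑_j √(p_j q_j) and ‖p−q‖₁ = ∑_j |p_j − q_j|. -/
import Mathlib


theorem fidelity_lower_bound_max_rel {n : ℕ} (p q : Fin n → ℝ) (l0 : ℝ)
    (hp : ∀ j, 0 ≤ p j) (hq : ∀ j, 0 ≤ q j)
    (hp1 : ∑ j, p j = 1) (hq1 : ∑ j, q j = 1)
    (hl0 : 1 < l0) (hdom : ∀ j, p j ≤ l0 * q j) :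
    ∑ j, Real.sqrt (p j * q j) ≥
      1 - (1 / 2) * (Real.sqrt l0 / (Real.sqrt l0 + 1)) * ∑ j, |p j - q j| := by
  set s := Real.sqrt l0 with hs
  have hs1 : 1 < s := by
    rw [hs, show (1:ℝ) = Real.sqrt 1 by simp]
    exact Real.sqrt_lt_sqrt (by norm_num) hl0
  set k := (s - 1) / (s + 1) with hk
  have hsp : (0:ℝ) < s + 1 := by linarith
  have hk0 : 0 ≤ k := div_nonneg (by linarith) hsp.le
  -- pointwise bound
  have key : ∀ j, (Real.sqrt (p j) - Real.sqrt (q j))^2 ≤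
      k * max (p j - q j) 0 + max (q j - p j) 0 := by
    intro j
    set u := Real.sqrt (p j) with hu'
    set v := Real.sqrt (q j) with hv'
    have hu : 0 ≤ u := Real.sqrt_nonneg _
    have hv : 0 ≤ v := Real.sqrt_nonneg _
    have hu2 : u^2 = p j := Real.sq_sqrt (hp j)
    have hv2 : v^2 = q j := Real.sq_sqrt (hq j)
    have hdomj : u ≤ s * v := by
      calc u ≤ Real.sqrt (l0 * q j) := Real.sqrt_le_sqrt (hdom j)
        _ = s * v := Real.sqrt_mul (by linarith : (0:ℝ) ≤ l0) _
    rcases le_or_gt (p j) (q j) with h | h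
    · have hmax1 : max (p j - q j) 0 = 0 := max_eq_right (by linarith)
      have hmax2 : max (q j - p j) 0 = q j - p j := max_eq_left (by linarith)
      have huv : u ≤ v := Real.sqrt_le_sqrt h
      rw [hmax1, hmax2, ← hu2, ← hv2]
      nlinarith [mul_nonneg (sub_nonneg.2 huv) hu]
    · have hmax1 : max (p j - q j) 0 = p j - q j := max_eq_left (by linarith)
      have hmax2 : max (q j - p j) 0 = 0 := max_eq_right (by linarith)
      have huv : v ≤ u := Real.sqrt_le_sqrt h.le
      rw [hmax1, hmax2, add_zero, ← hu2, ← hv2, hk, div_mul_eq_mul_div,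
        le_div_iff₀ hsp]
      nlinarith [mul_nonneg (sub_nonneg.2 huv) (sub_nonneg.2 hdomj)]
  set A := ∑ j, max (p j - q j) 0 with hA
  set B := ∑ j, max (q j - p j) 0 with hB
  set S := ∑ j, |p j - q j| with hS
  have hAB : A + B = S := by
    rw [hA, hB, hS, ← Finset.sum_add_distrib]
    refine Finset.sum_congr rfl fun j _ => ?_
    rcases le_total (p j) (q j) with h | h
    · rw [max_eq_right (by linarith), max_eq_left (by linarith),
        abs_of_nonpos (by linarith)]; ring
    · rw [max_eq_left (by linarith), max_eq_right (by linarith),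
        abs_of_nonneg (by linarith)]; ring
  have hABd : A - B = 0 := by
    have : A - B = ∑ j, (p j - q j) := by
      rw [hA, hB, ← Finset.sum_sub_distrib]
      refine Finset.sum_congr rfl fun j _ => ?_
      rcases le_total (p j) (q j) with h | h
      · rw [max_eq_right (by linarith), max_eq_left (by linarith)]; ring
      · rw [max_eq_left (by linarith), max_eq_right (by linarith)]; ring
    rw [this, Finset.sum_sub_distrib, hp1, hq1]; ring
  have hAeq : A = S / 2 := by linarith
  have hBeq : B = S / 2 := by linarith
  have hsum : ∑ j, (Real.sqrt (p j) - Real.sqrt (q j))^2 ≤ k * A + B := by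
    calc ∑ j, (Real.sqrt (p j) - Real.sqrt (q j))^2
        ≤ ∑ j, (k * max (p j - q j) 0 + max (q j - p j) 0) :=
          Finset.sum_le_sum fun j _ => key j
      _ = k * A + B := by
          rw [Finset.sum_add_distrib, ← Finset.mul_sum]
  have hexp : ∑ j, (Real.sqrt (p j) - Real.sqrt (q j))^2
      = 2 - 2 * ∑ j, Real.sqrt (p j * q j) := by
    have : ∀ j, (Real.sqrt (p j) - Real.sqrt (q j))^2
        = p j + q j - 2 * Real.sqrt (p j * q j) := by
      intro j
      rw [sub_sq, Real.sq_sqrt (hp j), Real.sq_sqrt (hq j),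
        Real.sqrt_mul (hp j)]
      ring
    rw [Finset.sum_congr rfl fun j _ => this j]
    rw [show (fun j => p j + q j - 2 * Real.sqrt (p j * q j)) =
      (fun j => (p j + q j) - 2 * Real.sqrt (p j * q j)) from rfl]
    rw [Finset.sum_sub_distrib, Finset.sum_add_distrib, hp1, hq1,
      ← Finset.mul_sum]
    norm_num
  have heq : (1/2 : ℝ) * (s / (s + 1)) = (k + 1) / 4 := by
    rw [hk]; field_simp; ring
  have : 2 - 2 * ∑ j, Real.sqrt (p j * q j) ≤ (k + 1) * (S / 2) := by
    rw [← hexp]; rw [hAeq] at hsum; rw [hBeq] at hsum; linarith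
  rw [ge_iff_le, heq]
  linarith
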